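/- With the hypotheses of the twisting theorem — R ∈ End(V⊗V) invertible satisfying the Yang–Baxter equation, F ∈ End(V⊗V) invertible, Φ, Ψ ∈ End(V⊗V⊗V) invertible with Φ F₁₂ = Ψ F₂₃, R₁₂ Φ = Φ^{(213)} R₁₂, R₂₃ Ψ = Ψ^{(132)} R₂₃ — set R̃ = τ(F)⁻¹ R F. Then the auxiliary identity F₁₂⁻¹ ∘ (Ψ^{(312)})⁻¹ ∘ R₁₃ ∘ R₂₃ ∘ Φ ∘ F₁₂ = R̃₁₃ ∘ R̃₂₃ holds in End(V ⊗ V ⊗ V). -/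
import Mathlib


open TensorProduct

noncomputable section
variable (k V : Type*) [Field k] [AddCommGroup V] [Module k V]

/-- The flip `P : V ⊗ V → V ⊗ V`. -/
def flipE : Module.End k (V ⊗[k] V) := (TensorProduct.comm k V V).toLinearMap

/-- `τ(X) = P X P`. -/
def tauE (X : Module.End k (V ⊗[k] V)) : Module.End k (V ⊗[k] V) :=
  flipE k V * X * flipE k V

/-- The embedding `X ↦ X₂₃` into `End(V ⊗ V ⊗ V)`. -/
def leg23 (X : Module.End k (V ⊗[k] V)) : Module.End k (V ⊗[k] (V ⊗[k] V)) :=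
  LinearMap.lTensor V X

/-- The embedding `X ↦ X₁₂` into `End(V ⊗ V ⊗ V)`. -/
def leg12 (X : Module.End k (V ⊗[k] V)) : Module.End k (V ⊗[k] (V ⊗[k] V)) :=
  (TensorProduct.assoc k V V V).toLinearMap ∘ₗ LinearMap.rTensor V X ∘ₗ
    (TensorProduct.assoc k V V V).symm.toLinearMap

/-- The flip of factors 1 and 2. -/
def P12 : Module.End k (V ⊗[k] (V ⊗[k] V)) := leg12 k V (flipE k V)

/-- The flip of factors 2 and 3. -/
def P23 : Module.End k (V ⊗[k] (V ⊗[k] V)) := leg23 k V (flipE k V)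

/-- The embedding `X ↦ X₁₃`. -/
def leg13 (X : Module.End k (V ⊗[k] V)) : Module.End k (V ⊗[k] (V ⊗[k] V)) :=
  P23 k V * leg12 k V X * P23 k V

/-- The Yang–Baxter equation `R₁₂R₁₃R₂₃ = R₂₃R₁₃R₁₂`. -/
def YB (R : Module.End k (V ⊗[k] V)) : Prop :=
  leg12 k V R * leg13 k V R * leg23 k V R = leg23 k V R * leg13 k V R * leg12 k V R

/-- The cyclic permutation of tensor factors `v₁⊗v₂⊗v₃ ↦ v₂⊗v₃⊗v₁`, i.e. the
permutation operator `P_σ` with `σ` such that `Y^{(312)} = P_σ Y P_σ⁻¹`. -/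
def C312 : Module.End k (V ⊗[k] (V ⊗[k] V)) := P23 k V * P12 k V

section Helpers

variable {k V}

lemma leg23_mul (X Y : Module.End k (V ⊗[k] V)) :
    leg23 k V (X * Y) = leg23 k V X * leg23 k V Y := by
  simp [leg23, Module.End.mul_eq_comp, LinearMap.lTensor_comp]

lemma leg23_one : leg23 k V (1 : Module.End k (V ⊗[k] V)) = 1 := by
  simp [leg23, Module.End.one_eq_id]

lemma leg12_mul (X Y : Module.End k (V ⊗[k] V)) :
    leg12 k V (X * Y) = leg12 k V X * leg12 k V Y := by
  ext v w u
  simp [leg12, Module.End.mul_apply]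

lemma leg12_one : leg12 k V (1 : Module.End k (V ⊗[k] V)) = 1 := by
  ext v w u
  simp [leg12]

lemma P23_sq : P23 k V * P23 k V = 1 := by
  rw [P23, ← leg23_mul]
  ext v w u
  simp [leg23, flipE]

lemma P12_sq : P12 k V * P12 k V = 1 := by
  rw [P12, ← leg12_mul]
  ext v w u
  simp [leg12, flipE]

lemma conj_P23_leg23 (X : Module.End k (V ⊗[k] V)) :
    P23 k V * leg23 k V X * P23 k V = leg23 k V (tauE k V X) := by
  rw [tauE, P23, ← leg23_mul, ← leg23_mul]

lemma conj_P12_leg12 (X : Module.End k (V ⊗[k] V)) :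
    P12 k V * leg12 k V X * P12 k V = leg12 k V (tauE k V X) := by
  rw [tauE, P12, ← leg12_mul, ← leg12_mul]

lemma conj_P12_leg23 (X : Module.End k (V ⊗[k] V)) :
    P12 k V * leg23 k V X * P12 k V = leg13 k V X := by
  ext v w u
  simp only [leg13, leg12, leg23, P12, P23, flipE, Module.End.mul_apply,
    LinearMap.coe_comp, Function.comp_apply, LinearEquiv.coe_coe,
    TensorProduct.AlgebraTensorModule.curry_apply, TensorProduct.curry_apply,
    LinearMap.coe_restrictScalars, LinearMap.lTensor_tmul, TensorProduct.comm_tmul,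
    TensorProduct.assoc_symm_tmul, LinearMap.rTensor_tmul, TensorProduct.assoc_tmul]
  induction X (v ⊗ₜ[k] u) using TensorProduct.induction_on with
  | zero => simp
  | tmul a b => simp [flipE]
  | add x y hx hy => simp_all [tmul_add, add_tmul]

lemma leg13_mul (X Y : Module.End k (V ⊗[k] V)) :
    leg13 k V (X * Y) = leg13 k V X * leg13 k V Y := by
  simp only [leg13, leg12_mul]
  have h := P23_sq (k := k) (V := V)
  calc P23 k V * (leg12 k V X * leg12 k V Y) * P23 k V
      = P23 k V * leg12 k V X * (P23 k V * P23 k V) * leg12 k V Y * P23 k V := by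
        rw [h, mul_one]; noncomm_ring
    _ = P23 k V * leg12 k V X * P23 k V * (P23 k V * leg12 k V Y * P23 k V) := by noncomm_ring

-- monoid cancellation helper
lemma csl {M : Type*} [Monoid M] {x y : M} (h : x * y = 1) (z : M) :
    x * (y * z) = z := by rw [← mul_assoc, h, one_mul]

end Helpers

/-- under the hypotheses of the twisting theorem, the auxiliary identity
`F₁₂⁻¹ (Ψ^{(312)})⁻¹ R₁₃ R₂₃ Φ F₁₂ = R̃₁₃ R̃₂₃` holds, where `R̃ = τ(F)⁻¹ R F`.
Here `(Ψ^{(312)})⁻¹ = P_σ Ψ⁻¹ P_σ⁻¹` with `P_σ = C312`. -/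
theorem twist_auxiliary_identity [FiniteDimensional k V]
    (R R' F F' : Module.End k (V ⊗[k] V))
    (Φ Φ' Ψ Ψ' : Module.End k (V ⊗[k] (V ⊗[k] V)))
    (hR : R * R' = 1) (hR' : R' * R = 1)
    (hF : F * F' = 1) (hF' : F' * F = 1)
    (hΦ : Φ * Φ' = 1) (hΦ' : Φ' * Φ = 1)
    (hΨ : Ψ * Ψ' = 1) (hΨ' : Ψ' * Ψ = 1)
    (hYB : YB k V R)
    (cond1 : Φ * leg12 k V F = Ψ * leg23 k V F)
    (cond2 : leg12 k V R * Φ = (P12 k V * Φ * P12 k V) * leg12 k V R)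
    (cond3 : leg23 k V R * Ψ = (P23 k V * Ψ * P23 k V) * leg23 k V R) :
    leg12 k V F' * (C312 k V * Ψ' * (P12 k V * P23 k V)) *
      leg13 k V R * leg23 k V R * Φ * leg12 k V F =
    leg13 k V (tauE k V F' * R * F) * leg23 k V (tauE k V F' * R * F) := by
  set p := P12 k V with hp
  set q := P23 k V with hq
  -- basic cancellations
  have haFF' : leg12 k V F * leg12 k V F' = 1 := by rw [← leg12_mul, hF, leg12_one]
  have haF'F : leg12 k V F' * leg12 k V F = 1 := by rw [← leg12_mul, hF', leg12_one]
  have hbFF' : leg23 k V F * leg23 k V F' = 1 := by rw [← leg23_mul, hF, leg23_one]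
  have hbF'F : leg23 k V F' * leg23 k V F = 1 := by rw [← leg23_mul, hF', leg23_one]
  have hpp : ∀ z, p * (p * z) = z := csl P12_sq
  have hqq : ∀ z, q * (q * z) = z := csl P23_sq
  -- Ψ and Φ in terms of each other
  have hΨeq : Ψ = Φ * leg12 k V F * leg23 k V F' := by
    rw [cond1, mul_assoc, hbFF', mul_one]
  have hΨ'eq : Ψ' = leg23 k V F * (leg12 k V F' * Φ') := by
    have hone : Ψ * (leg23 k V F * (leg12 k V F' * Φ')) = 1 := by
      rw [hΨeq]
      calc Φ * leg12 k V F * leg23 k V F' * (leg23 k V F * (leg12 k V F' * Φ'))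
          = Φ * (leg12 k V F * ((leg23 k V F' * leg23 k V F) * (leg12 k V F' * Φ'))) := by
            noncomm_ring
        _ = 1 := by rw [hbF'F, one_mul, csl haFF', hΦ]
    calc Ψ' = Ψ' * (Ψ * (leg23 k V F * (leg12 k V F' * Φ'))) := by rw [hone, mul_one]
      _ = (Ψ' * Ψ) * (leg23 k V F * (leg12 k V F' * Φ')) := by rw [mul_assoc]
      _ = leg23 k V F * (leg12 k V F' * Φ') := by rw [hΨ', one_mul]
  have hΦz : ∀ z, Φ * z = Ψ * (leg23 k V F * (leg12 k V F' * z)) := by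
    intro z
    conv_lhs => rw [show Φ = Ψ * leg23 k V F * leg12 k V F' by
      rw [← cond1, mul_assoc, haFF', mul_one]]
    simp only [mul_assoc]
  -- conjugation z-forms
  have hap : ∀ X z, leg12 k V X * (p * z) = p * (leg12 k V (tauE k V X) * z) := by
    intro X z
    have h : leg12 k V X * p = p * leg12 k V (tauE k V X) := by
      calc leg12 k V X * p = p * (p * (leg12 k V X * p)) := by
            rw [← mul_assoc, ← mul_assoc, P12_sq, one_mul]
        _ = p * (p * leg12 k V X * p) := by rw [mul_assoc (p) (leg12 k V X) p]
        _ = p * leg12 k V (tauE k V X) := by rw [conj_P12_leg12]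
    rw [← mul_assoc, h, mul_assoc]
  have hbp : ∀ X z, leg23 k V X * (p * z) = p * (leg13 k V X * z) := by
    intro X z
    have h : leg23 k V X * p = p * leg13 k V X := by
      calc leg23 k V X * p = p * (p * (leg23 k V X * p)) := by
            rw [← mul_assoc, ← mul_assoc, P12_sq, one_mul]
        _ = p * (p * leg23 k V X * p) := by rw [mul_assoc p (leg23 k V X) p]
        _ = p * leg13 k V X := by rw [conj_P12_leg23]
    rw [← mul_assoc, h, mul_assoc]
  have hqa : ∀ X z, q * (leg12 k V X * z) = leg13 k V X * (q * z) := by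
    intro X z
    have h : q * leg12 k V X = leg13 k V X * q := by
      rw [leg13, ← hq, mul_assoc, mul_assoc, P23_sq, mul_one]
    rw [← mul_assoc, h, mul_assoc]
  have hqc : ∀ X z, q * (leg13 k V X * z) = leg12 k V X * (q * z) := by
    intro X z
    have h : q * leg13 k V X = leg12 k V X * q := by
      rw [leg13, ← hq, ← mul_assoc, ← mul_assoc, P23_sq, one_mul]
    rw [← mul_assoc, h, mul_assoc]
  have hcz : ∀ X z, leg13 k V X * z = q * (leg12 k V X * (q * z)) := by
    intro X z
    rw [leg13, ← hq]; simp only [mul_assoc]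
  have hqbq : ∀ X z, q * (leg23 k V X * (q * z)) = leg23 k V (tauE k V X) * z := by
    intro X z
    rw [← conj_P23_leg23, ← hq]; simp only [mul_assoc]
  -- z-forms of cond2, cond3
  have c2z : ∀ z, leg12 k V R * (Φ * z) = p * (Φ * (p * (leg12 k V R * z))) := by
    intro z; simp only [← mul_assoc]; rw [cond2]
  have c3z : ∀ z, leg23 k V R * (Ψ * z) = q * (Ψ * (q * (leg23 k V R * z))) := by
    intro z; simp only [← mul_assoc]; rw [cond3]
  -- normalize RHS
  rw [leg13_mul, leg13_mul, leg23_mul, leg23_mul, C312, ← hp, ← hq]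
  simp only [mul_assoc]
  -- now the word computation
  rw [hΨ'eq]
  simp only [mul_assoc]
  rw [hΦz (leg12 k V F), haF'F, mul_one, c3z (leg23 k V F),
      show Ψ * (q * (leg23 k V R * leg23 k V F))
         = Φ * (leg12 k V F * (leg23 k V F' * (q * (leg23 k V R * leg23 k V F)))) by
        conv_lhs => rw [hΨeq]
        simp only [mul_assoc],
      hcz R]
  rw [hqq, hqq, c2z, hpp, csl hΦ', hap F', hbp F, hpp, hqc F, csl haF'F, hqa (tauE k V F'),
      hqa R, hqa F, hqbq F']
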